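/- Fix a labeled dataset S of n points in X × Y, and for each φ ∈ Φ let h_{S,φ}(x,y) = 1 iff the k-nearest-neighbor classifier trained on φ(S) predicts y at φ(x). If the distance dimension ∂(Φ) is finite, then the VC dimension of H(S,Φ) = {h_{S,φ} : φ ∈ Φ} is at most c·∂(Φ)·log(n + ∂(Φ)) for an absolute constant c. -/

import Mathlib

/-- `H` shatters the finite set `s` (propositional form). -/
def ShattersP {α : Type*} (H : Set (α → Prop)) (s : Finset α) : Prop :=
  ∀ t ⊆ s, ∃ h ∈ H, ∀ x ∈ s, (h x ↔ x ∈ t)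


lemma aux_real (v d n : ℕ) (hv : 1 ≤ v) (hd : 1 ≤ d) (hn : 1 ≤ n)
    (h : (2:ℝ)^v ≤ ((d:ℝ)+1) * ((v:ℝ) * (n:ℝ)^2)^d) :
    (v:ℝ) ≤ (14 / Real.log 2) * d * Real.log (n + d) := by
  have hV : (1:ℝ) ≤ v := by exact_mod_cast hv
  have hD : (1:ℝ) ≤ d := by exact_mod_cast hd
  have hN : (1:ℝ) ≤ n := by exact_mod_cast hn
  have hVp : (0:ℝ) < v := by linarith
  have hDp : (0:ℝ) < d := by linarith
  have hNp : (0:ℝ) < n := by linarith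
  set L := Real.log ((n:ℝ) + d) with hLdef
  have hND : (2:ℝ) ≤ (n:ℝ) + d := by linarith
  have hl2 : (0:ℝ) < Real.log 2 := Real.log_pos (by norm_num)
  have hl2half : (1:ℝ)/2 ≤ Real.log 2 := by
    have := Real.log_two_gt_d9; linarith
  have hL2 : Real.log 2 ≤ L := Real.log_le_log (by norm_num) hND
  have hLp : 0 < L := lt_of_lt_of_le hl2 hL2
  have hbase : (0:ℝ) < (2:ℝ)^v := by positivity
  have h0 : (v:ℝ) * Real.log 2 ≤ Real.log ((d:ℝ)+1) + d * Real.log ((v:ℝ) * (n:ℝ)^2) := by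
    have := Real.log_le_log hbase h
    rw [Real.log_pow, Real.log_mul (by linarith) (by positivity), Real.log_pow] at this
    exact_mod_cast this
  have h1 : Real.log ((d:ℝ)+1) ≤ 2 * L := by
    have : ((d:ℝ)+1) ≤ ((n:ℝ)+d)^2 := by nlinarith
    calc Real.log ((d:ℝ)+1) ≤ Real.log (((n:ℝ)+d)^2) := Real.log_le_log (by linarith) this
      _ = 2 * L := by rw [Real.log_pow]; norm_num; exact hLdef.symm
  have h2 : Real.log ((v:ℝ) * (n:ℝ)^2) ≤ Real.log v + 2 * L := by
    rw [Real.log_mul (by linarith) (by positivity), Real.log_pow]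
    have : Real.log n ≤ L := Real.log_le_log hNp (by linarith)
    push_cast
    linarith
  have h3 : Real.log v ≤ (Real.log 2 / (2*d)) * v + Real.log (4*d) := by
    set a : ℝ := Real.log 2 / (2*d) with hadef
    have hap : 0 < a := by positivity
    have key : Real.log ((a) * v) ≤ a * v - 1 := Real.log_le_sub_one_of_pos (by positivity)
    rw [Real.log_mul (ne_of_gt hap) (ne_of_gt hVp)] at key
    have hinv : Real.log a = - Real.log (2*d / Real.log 2) := by
      rw [hadef, ← Real.log_inv]
      congr 1
      field_simp
    have hmono : Real.log (2*d / Real.log 2) ≤ Real.log (4*d) := by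
      apply Real.log_le_log (by positivity)
      rw [div_le_iff₀ hl2]
      nlinarith
    rw [hinv] at key
    linarith
  have h4 : Real.log (4*d) ≤ 3 * L := by
    have hcube : (0:ℝ) ≤ (((n:ℝ)+d)-2) * (((n:ℝ)+d) * (((n:ℝ)+d)+2)) :=
      mul_nonneg (by linarith) (by positivity)
    have : (4:ℝ)*d ≤ ((n:ℝ)+d)^3 := by nlinarith
    calc Real.log (4*(d:ℝ)) ≤ Real.log (((n:ℝ)+d)^3) := Real.log_le_log (by positivity) this
      _ = 3 * L := by rw [Real.log_pow]; norm_num; exact hLdef.symm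
  -- combine
  have hlogs : Real.log ((v:ℝ) * (n:ℝ)^2) ≤ (Real.log 2/(2*d))*v + Real.log (4*d) + 2*L := by
    linarith
  have hdl := mul_le_mul_of_nonneg_left hlogs hDp.le
  have e1 : (d:ℝ) * ((Real.log 2/(2*d))*v + Real.log (4*d) + 2*L)
      = (Real.log 2/2)*v + d*Real.log (4*d) + 2*(d*L) := by
    field_simp
  rw [e1] at hdl
  have h4' : (d:ℝ) * Real.log (4*d) ≤ 3*(d*L) := by
    have := mul_le_mul_of_nonneg_left h4 hDp.le
    linarith
  have h1' : Real.log ((d:ℝ)+1) ≤ 2*(d*L) := by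
    have : L ≤ d*L := le_mul_of_one_le_left hLp.le hD
    linarith
  have h14 : (v:ℝ) * Real.log 2 ≤ 14 * ((d:ℝ)*L) := by linarith
  rw [div_mul_eq_mul_div, div_mul_eq_mul_div, le_div_iff₀ hl2]
  linarith


open Finset in
lemma aux_nat {X Z Y : Type} [MetricSpace Z] (Φ : Set (X → Z)) (d n : ℕ)
    (S : Fin n → X × Y) (predict : (X → Z) → X → Y)
    (hcomp : ∀ s : Finset (X × X × X × X),
      (∀ t ⊆ s, ∃ h ∈ {g | ∃ φ ∈ Φ,
          g = fun q : X × X × X × X =>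
            dist (φ q.2.2.1) (φ q.2.2.2) ≤ dist (φ q.1) (φ q.2.1)},
        ∀ x ∈ s, (h x ↔ x ∈ t)) →
      s.card ≤ d)
    (hdet : ∀ φ ∈ Φ, ∀ φ' ∈ Φ, ∀ x : X,
      (∀ i j : Fin n,
        dist (φ x) (φ (S i).1) ≤ dist (φ x) (φ (S j).1) ↔
        dist (φ' x) (φ' (S i).1) ≤ dist (φ' x) (φ' (S j).1)) →
      predict φ x = predict φ' x)
    (s : Finset (X × Y)) (hv : 1 ≤ s.card) (hn : 1 ≤ n)
    (hshat : ∀ t ⊆ s, ∃ h ∈ {g | ∃ φ ∈ Φ, g = fun p : X × Y => predict φ p.1 = p.2},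
      ∀ x ∈ s, (h x ↔ x ∈ t)) :
    2 ^ s.card ≤ (d + 1) * (s.card * n ^ 2) ^ d := by
  classical
  -- a fallback feature map
  obtain ⟨h₀, ⟨φ₀, hφ₀, rfl⟩, -⟩ := hshat ∅ (empty_subset s)
  set α := {x // x ∈ s} × Fin n × Fin n with hα
  set T : (X → Z) → Finset α := fun φ => Finset.univ.filter
    (fun a => dist (φ (a.1 : X × Y).1) (φ (S a.2.1).1)
      ≤ dist (φ (a.1 : X × Y).1) (φ (S a.2.2).1)) with hT
  set 𝒜 : Finset (Finset α) := Finset.univ.filter (fun t => ∃ φ ∈ Φ, t = T φ) with h𝒜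
  -- choice of classifier for each target labeling
  have hch : ∀ t : Finset (X × Y), ∃ φ, φ ∈ Φ ∧
      (t ⊆ s → ∀ x ∈ s, (predict φ x.1 = x.2 ↔ x ∈ t)) := by
    intro t
    by_cases hts : t ⊆ s
    · obtain ⟨h, ⟨φ, hφ, rfl⟩, hh⟩ := hshat t hts
      exact ⟨φ, hφ, fun _ x hx => hh x hx⟩
    · exact ⟨φ₀, hφ₀, fun h' => absurd h' hts⟩
  choose F hFΦ hFlab using hch
  -- Step A : 2 ^ |s| ≤ |𝒜|
  have stepA : 2 ^ s.card ≤ 𝒜.card := by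
    rw [← Finset.card_powerset]
    apply Finset.card_le_card_of_injOn (fun t => T (F t))
    · intro t ht
      simp only [Finset.mem_coe, h𝒜, Finset.mem_filter, Finset.mem_univ, true_and]
      exact ⟨F t, hFΦ t, rfl⟩
    · intro t ht t' ht' heq
      simp only [Finset.coe_powerset, Set.mem_preimage, Set.mem_powerset_iff,
        Finset.coe_subset] at ht ht'
      have hpred : ∀ x ∈ s, predict (F t) x.1 = predict (F t') x.1 := by
        intro x hx
        apply hdet (F t) (hFΦ t) (F t') (hFΦ t') x.1
        intro i j
        have := Finset.ext_iff.1 heq (⟨x, hx⟩, i, j)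
        simpa only [hT, Finset.mem_filter, Finset.mem_univ, true_and] using this
      ext a
      by_cases ha : a ∈ s
      · rw [← hFlab t ht a ha, ← hFlab t' ht' a ha, hpred a ha]
      · exact iff_of_false (fun h => ha (ht h)) (fun h => ha (ht' h))
  -- the query map
  set q : α → X × X × X × X := fun a =>
    ((a.1 : X × Y).1, (S a.2.2).1, (a.1 : X × Y).1, (S a.2.1).1) with hq
  have hTq : ∀ φ (a : α), a ∈ T φ ↔
      dist (φ (q a).2.2.1) (φ (q a).2.2.2) ≤ dist (φ (q a).1) (φ (q a).2.1) := by
    intro φ a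
    simp [hT, hq]
  -- Step B : VC dimension of 𝒜 is at most d
  have stepB : 𝒜.vcDim ≤ d := by
    rw [Finset.vcDim]
    apply Finset.sup_le
    intro u hu
    rw [Finset.mem_shatterer] at hu
    have hinj : Set.InjOn q u := by
      intro a ha b hb hab
      by_contra hne
      obtain ⟨r, hr, hur⟩ := hu (t := {a}) (Finset.singleton_subset_iff.2 ha)
      simp only [h𝒜, Finset.mem_filter, Finset.mem_univ, true_and] at hr
      obtain ⟨φ, hφ, rfl⟩ := hr
      have haR : a ∈ T φ ↔ b ∈ T φ := by rw [hTq, hTq, hab]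
      have ha' : a ∈ u ∩ T φ := hur ▸ Finset.mem_singleton_self a
      have hb' : b ∈ u ∩ T φ := Finset.mem_inter.2 ⟨hb, haR.1 (Finset.mem_inter.1 ha').2⟩
      rw [hur, Finset.mem_singleton] at hb'
      exact hne (hb' ▸ rfl)
    have hcard : u.card = (u.image q).card := (Finset.card_image_of_injOn hinj).symm
    rw [hcard]
    apply hcomp
    intro t' ht'
    set t : Finset α := u.filter (fun a => q a ∈ t') with ht
    obtain ⟨r, hr, hur⟩ := hu (t := t) (Finset.filter_subset _ _)
    simp only [h𝒜, Finset.mem_filter, Finset.mem_univ, true_and] at hr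
    obtain ⟨φ, hφ, rfl⟩ := hr
    refine ⟨fun p => dist (φ p.2.2.1) (φ p.2.2.2) ≤ dist (φ p.1) (φ p.2.1),
      ⟨φ, hφ, rfl⟩, ?_⟩
    intro p hp
    obtain ⟨a, ha, rfl⟩ := Finset.mem_image.1 hp
    show (dist (φ (q a).2.2.1) (φ (q a).2.2.2) ≤ dist (φ (q a).1) (φ (q a).2.1)) ↔ q a ∈ t'
    rw [← hTq φ a]
    constructor
    · intro haT
      have : a ∈ u ∩ T φ := Finset.mem_inter.2 ⟨ha, haT⟩
      rw [hur, ht, Finset.mem_filter] at this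
      exact this.2
    · intro hqt
      have : a ∈ t := by rw [ht, Finset.mem_filter]; exact ⟨ha, hqt⟩
      rw [← hur, Finset.mem_inter] at this
      exact this.2
  -- Step C : Sauer-Shelah
  have hcardα : Fintype.card α = s.card * n ^ 2 := by
    simp [hα, Fintype.card_prod, Fintype.card_coe, sq, mul_assoc]
  calc 2 ^ s.card ≤ 𝒜.card := stepA
    _ ≤ 𝒜.shatterer.card := Finset.card_le_card_shatterer 𝒜
    _ ≤ ∑ k ∈ Finset.Iic 𝒜.vcDim, (Fintype.card α).choose k :=
        Finset.card_shatterer_le_sum_vcDim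
    _ ≤ ∑ k ∈ Finset.Iic d, (Fintype.card α).choose k := by
        apply Finset.sum_le_sum_of_subset
        exact Finset.Iic_subset_Iic.2 stepB
    _ ≤ ∑ k ∈ Finset.Iic d, (s.card * n ^ 2) ^ d := by
        apply Finset.sum_le_sum
        intro k hk
        rw [Finset.mem_Iic] at hk
        calc (Fintype.card α).choose k ≤ (Fintype.card α) ^ k := Nat.choose_le_pow _ _
          _ = (s.card * n ^ 2) ^ k := by rw [hcardα]
          _ ≤ (s.card * n ^ 2) ^ d := by
              exact Nat.pow_le_pow_right (Nat.one_le_iff_ne_zero.2 (by positivity)) hk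
    _ = (d + 1) * (s.card * n ^ 2) ^ d := by
        rw [Finset.sum_const, Nat.card_Iic, smul_eq_mul]

/-- There is an absolute constant `c` such that: for any family `Φ` of feature maps `X → Z`
whose distance comparer class has VC dimension (distance dimension) at most `d`, any labeled
dataset `S` of `n` points, and any nearest-neighbour style predictor whose prediction at `x`
under `φ` is determined by the pairwise distance comparisons of `φ x` to the points of `S`,
the VC dimension of the loss class `H(S,Φ) = {(x,y) ↦ 1[N_S^φ(x) = y] : φ ∈ Φ}` is at most
`c · d · log (n + d)`. -/
theorem stmt_6 : ∃ c : ℝ, 0 < c ∧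
    ∀ (X Z Y : Type) [MetricSpace Z] (Φ : Set (X → Z)) (d n : ℕ)
      (S : Fin n → X × Y) (predict : (X → Z) → X → Y),
      1 ≤ d → 1 ≤ n →
      (∀ s : Finset (X × X × X × X),
        ShattersP {g | ∃ φ ∈ Φ,
          g = fun q : X × X × X × X =>
            dist (φ q.2.2.1) (φ q.2.2.2) ≤ dist (φ q.1) (φ q.2.1)} s →
        s.card ≤ d) →
      (∀ φ ∈ Φ, ∀ φ' ∈ Φ, ∀ x : X,
        (∀ i j : Fin n,
          dist (φ x) (φ (S i).1) ≤ dist (φ x) (φ (S j).1) ↔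
          dist (φ' x) (φ' (S i).1) ≤ dist (φ' x) (φ' (S j).1)) →
        predict φ x = predict φ' x) →
      ∀ s : Finset (X × Y),
        ShattersP {g | ∃ φ ∈ Φ, g = fun p : X × Y => predict φ p.1 = p.2} s →
        (s.card : ℝ) ≤ c * d * Real.log (n + d) := by
  refine ⟨14 / Real.log 2, by positivity, ?_⟩
  intro X Z Y _ Φ d n S predict hd hn hcomp hdet s hshat
  by_cases hv : s.card = 0
  · rw [hv]
    have h1 : (0:ℝ) ≤ Real.log ((n:ℝ) + d) := by
      apply Real.log_nonneg
      have : (1:ℝ) ≤ (n:ℝ) := by exact_mod_cast hn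
      have : (0:ℝ) ≤ (d:ℝ) := by positivity
      push_cast
      linarith
    have h2 : (0:ℝ) ≤ 14 / Real.log 2 := by positivity
    push_cast
    have h3 : (0:ℝ) ≤ (d:ℝ) := by positivity
    exact mul_nonneg (mul_nonneg h2 h3) h1
  · have hv1 : 1 ≤ s.card := Nat.one_le_iff_ne_zero.2 hv
    have hnat := aux_nat Φ d n S predict hcomp hdet s hv1 hn hshat
    have hnat' : (2:ℝ)^s.card ≤ ((d:ℝ)+1) * ((s.card:ℝ) * (n:ℝ)^2)^d := by
      exact_mod_cast hnat
    exact aux_real s.card d n hv1 hd hn hnat'
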